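/- Let A and B be finite types and let φ₀, φ₁ : A × B → ℂ be unit vectors, with reduced states ρ₀ = ptrA φ₀ and ρ₁ = ptrA φ₁. Then there exists a unit vector φ : A × B → ℂ with ptrA φ = ρ₀ such that |⟨φ, φ₁⟩| = F(ρ₀, ρ₁). (Uhlmann's theorem in purification form: the fidelity of the two reduced states is attained as the overlap of φ₁ with some purification of ρ₀.) -/

import Mathlib

open scoped ComplexOrder
open Matrix

noncomputable section

/-- Partial trace over `A` of the outer product `|ψ⟩⟨ψ|`:
`(ptrA ψ) j q = ∑ i, ψ (i, j) * conj (ψ (i, q))`. -/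
def ptrA {A B : Type*} [Fintype A] (ψ : A × B → ℂ) : Matrix B B ℂ :=
  fun j q => ∑ i : A, ψ (i, j) * (starRingEnd ℂ) (ψ (i, q))

/-- The Kronecker product `S ⊗ I` with the identity on `B`, as a matrix on `A × B`. -/
def kronId {A B : Type*} [DecidableEq B] (S : Matrix A A ℂ) : Matrix (A × B) (A × B) ℂ :=
  Matrix.kroneckerMap (· * ·) S (1 : Matrix B B ℂ)

/-- `ptrA ψ` is a Gram matrix, hence positive semidefinite. -/
lemma ptrA_posSemidef {A B : Type*} [Fintype A] [Fintype B] (ψ : A × B → ℂ) :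
    (ptrA ψ).PosSemidef := by
  set V : Matrix A B ℂ := Matrix.of fun i j => (starRingEnd ℂ) (ψ (i, j)) with hV
  have h := Matrix.posSemidef_conjTranspose_mul_self V
  have heq : ptrA ψ = Vᴴ * V := by
    ext j q
    simp [Matrix.mul_apply, Matrix.conjTranspose_apply, ptrA, hV, mul_comm]
  rw [heq]; exact h

namespace Matrix.PosSemidef

/-- The positive semidefinite square root of a positive semidefinite matrix
(the definition of Mathlib of December 2024, which has since been removed). -/
noncomputable def sqrt {n 𝕜 : Type*} [Fintype n] [DecidableEq n] [RCLike 𝕜] {A : Matrix n n 𝕜}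
    (hA : A.PosSemidef) : Matrix n n 𝕜 :=
  hA.1.eigenvectorUnitary.1 * diagonal ((↑) ∘ Real.sqrt ∘ hA.1.eigenvalues) *
  (star hA.1.eigenvectorUnitary : Matrix n n 𝕜)

lemma posSemidef_sqrt {n 𝕜 : Type*} [Fintype n] [DecidableEq n] [RCLike 𝕜] {A : Matrix n n 𝕜}
    (hA : A.PosSemidef) : hA.sqrt.PosSemidef := by
  have hd : (0 : n → 𝕜) ≤ ((↑) ∘ Real.sqrt ∘ hA.1.eigenvalues : n → 𝕜) :=
    fun i => RCLike.ofReal_nonneg.mpr (Real.sqrt_nonneg _)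
  exact (PosSemidef.diagonal hd).mul_mul_conjTranspose_same (hA.1.eigenvectorUnitary : Matrix n n 𝕜)

end Matrix.PosSemidef

namespace Matrix.PosSemidef

open scoped MatrixOrder in
lemma sqrt_eq_cfc_sqrt {n : Type*} [Fintype n] [DecidableEq n] {A : Matrix n n ℂ}
    (hA : A.PosSemidef) : hA.sqrt = CFC.sqrt A := by
  rw [CFC.sqrt_eq_real_sqrt A hA.nonneg, cfcₙ_eq_cfc, hA.1.cfc_eq]
  simp [Matrix.IsHermitian.cfc, Matrix.PosSemidef.sqrt]

open scoped MatrixOrder in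
lemma sqrt_mul_self {n : Type*} [Fintype n] [DecidableEq n] {A : Matrix n n ℂ}
    (hA : A.PosSemidef) : hA.sqrt * hA.sqrt = A := by
  rw [sqrt_eq_cfc_sqrt]
  exact CFC.sqrt_mul_sqrt_self A hA.nonneg

open scoped MatrixOrder in
lemma eq_sqrt_of_sq_eq {n : Type*} [Fintype n] [DecidableEq n] {A B : Matrix n n ℂ}
    (hA : A.PosSemidef) (hB : B.PosSemidef) (h : A ^ 2 = B) : A = hB.sqrt := by
  rw [sqrt_eq_cfc_sqrt]
  exact (CFC.sqrt_unique (by rw [← sq]; exact h) hA.nonneg).symm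

end Matrix.PosSemidef

lemma sqrt_mul_mul_sqrt_posSemidef {B : Type*} [Fintype B] [DecidableEq B]
    {ρ σ : Matrix B B ℂ} (hρ : ρ.PosSemidef) (hσ : σ.PosSemidef) :
    (hρ.sqrt * σ * hρ.sqrt).PosSemidef := by
  have h := hσ.mul_mul_conjTranspose_same hρ.sqrt
  rwa [hρ.posSemidef_sqrt.isHermitian.eq] at h

/-- The fidelity `F(ρ, σ) = tr √(√ρ * σ * √ρ)` of two positive semidefinite matrices. -/
def fidelity {B : Type*} [Fintype B] [DecidableEq B] {ρ σ : Matrix B B ℂ}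
    (hρ : ρ.PosSemidef) (hσ : σ.PosSemidef) : ℝ :=
  ((sqrt_mul_mul_sqrt_posSemidef hρ hσ).sqrt.trace).re

namespace UhlmannAux

variable {n m : Type*} [Fintype n] [DecidableEq n]

private lemma diag_comp_mul (e : n → ℝ) (f g : ℝ → ℝ) :
    (diagonal (RCLike.ofReal ∘ f ∘ e) : Matrix n n ℂ) * diagonal (RCLike.ofReal ∘ g ∘ e) =
      diagonal (RCLike.ofReal ∘ (fun x => f x * g x) ∘ e) := by
  rw [diagonal_mul_diagonal]
  congr 1
  funext i
  simp

/-- Functional calculus for a Hermitian matrix via the spectral theorem. -/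
def matFun {P : Matrix n n ℂ} (hP : P.IsHermitian) (f : ℝ → ℝ) : Matrix n n ℂ :=
  (hP.eigenvectorUnitary : Matrix n n ℂ) * diagonal (RCLike.ofReal ∘ f ∘ hP.eigenvalues) *
    star (hP.eigenvectorUnitary : Matrix n n ℂ)

variable {P : Matrix n n ℂ} (hP : P.IsHermitian)

lemma matFun_mul (f g : ℝ → ℝ) :
    matFun hP f * matFun hP g = matFun hP (fun x => f x * g x) := by
  have h1 : star (hP.eigenvectorUnitary : Matrix n n ℂ) * (hP.eigenvectorUnitary : Matrix n n ℂ)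
      = 1 := Unitary.coe_star_mul_self _
  simp only [matFun, Matrix.mul_assoc]
  rw [← Matrix.mul_assoc (star _) _, h1, Matrix.one_mul,
    ← Matrix.mul_assoc (diagonal _), diag_comp_mul]

lemma matFun_id : matFun hP (fun x => x) = P := by
  rw [matFun]
  exact hP.spectral_theorem.symm

lemma matFun_one : matFun hP (fun _ => 1) = 1 := by
  have h2 : (hP.eigenvectorUnitary : Matrix n n ℂ) * star (hP.eigenvectorUnitary : Matrix n n ℂ)
      = 1 := Unitary.coe_mul_star_self _
  rw [matFun]
  have h : diagonal (RCLike.ofReal ∘ (fun _ : ℝ => (1:ℝ)) ∘ hP.eigenvalues) = (1 : Matrix n n ℂ) := by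
    rw [← diagonal_one]
    congr 1
  rw [h, Matrix.mul_one, h2]

lemma matFun_add (f g : ℝ → ℝ) :
    matFun hP f + matFun hP g = matFun hP (fun x => f x + g x) := by
  simp only [matFun, ← Matrix.add_mul, ← Matrix.mul_add, ← diagonal_add]
  congr 3
  funext i j
  by_cases h : i = j <;> simp [diagonal_apply, h]

lemma matFun_conjTranspose (f : ℝ → ℝ) : (matFun hP f)ᴴ = matFun hP f := by
  simp only [matFun, ← Matrix.star_eq_conjTranspose]
  simp only [StarMul.star_mul, star_star, mul_assoc]
  congr 1
  rw [Matrix.star_eq_conjTranspose, diagonal_conjTranspose]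
  congr 1
  funext i j
  by_cases h : i = j <;> simp [diagonal_apply, h, Complex.conj_ofReal]

lemma matFun_trace (f : ℝ → ℝ) :
    (matFun hP f).trace = ∑ i, (f (hP.eigenvalues i) : ℂ) := by
  have h1 : star (hP.eigenvectorUnitary : Matrix n n ℂ) * (hP.eigenvectorUnitary : Matrix n n ℂ)
      = 1 := Unitary.coe_star_mul_self _
  rw [matFun, Matrix.trace_mul_comm, ← Matrix.mul_assoc, h1, Matrix.one_mul, trace_diagonal]
  simp


/-- indicator of nonzero -/
def chif : ℝ → ℝ := fun x => if x = 0 then 0 else 1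

lemma matFun_congr (f g : ℝ → ℝ) (h : ∀ x, f x = g x) : matFun hP f = matFun hP g := by
  rw [show f = g from funext h]

lemma mul_chif_right : P * matFun hP chif = P := by
  have h : matFun hP (fun x => x) * matFun hP chif = matFun hP (fun x => x) := by
    rw [matFun_mul]
    exact matFun_congr hP _ _ (fun x => by by_cases h : x = 0 <;> simp [chif, h])
  rwa [matFun_id] at h

lemma mul_chif_left : matFun hP chif * P = P := by
  have h : matFun hP chif * matFun hP (fun x => x) = matFun hP (fun x => x) := by
    rw [matFun_mul]
    exact matFun_congr hP _ _ (fun x => by by_cases h : x = 0 <;> simp [chif, h])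
  rwa [matFun_id] at h

lemma mul_chif_of_sq {m : Type*} [Fintype m] (X : Matrix m n ℂ) (hXP : Xᴴ * X = P * P) :
    X * matFun hP chif = X := by
  set S := matFun hP chif with hSdef
  have hSh : Sᴴ = S := matFun_conjTranspose hP chif
  have hPS : P * S = P := mul_chif_right hP
  have hSP : S * P = P := mul_chif_left hP
  have hA2S : Xᴴ * X * S = Xᴴ * X := by rw [hXP, Matrix.mul_assoc, hPS]
  have hSA2 : S * (Xᴴ * X) = Xᴴ * X := by rw [hXP, ← Matrix.mul_assoc, hSP]
  have key : (X * S - X)ᴴ * (X * S - X) = 0 := by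
    rw [conjTranspose_sub, conjTranspose_mul, hSh, Matrix.sub_mul, Matrix.mul_sub,
      Matrix.mul_sub]
    have t1 : Xᴴ * (X * S) = Xᴴ * X := by rw [← Matrix.mul_assoc, hA2S]
    have t2 : S * Xᴴ * X = Xᴴ * X := by rw [Matrix.mul_assoc, hSA2]
    have t3 : S * Xᴴ * (X * S) = Xᴴ * X := by
      rw [Matrix.mul_assoc, ← Matrix.mul_assoc Xᴴ, hA2S, hSA2]
    rw [t1, t2, t3]
    abel
  exact sub_eq_zero.mp (conjTranspose_mul_self_eq_zero.mp key)

lemma exists_W {m : Type*} [Fintype m] (X : Matrix m n ℂ) (hXP : Xᴴ * X = P * P) :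
    ∃ W : Matrix m n ℂ, W * P = X ∧ Wᴴ * W = matFun hP chif ∧ W * matFun hP chif = W := by
  refine ⟨X * matFun hP (fun x => x⁻¹), ?_, ?_, ?_⟩
  · have h : matFun hP (fun x => x⁻¹) * matFun hP (fun x => x) = matFun hP chif := by
      rw [matFun_mul]
      exact matFun_congr hP _ _ (fun x => by by_cases h : x = 0 <;> simp [chif, h])
    rw [matFun_id] at h
    rw [Matrix.mul_assoc, h]
    exact mul_chif_of_sq hP X hXP
  · have hih : (matFun hP fun x => x⁻¹)ᴴ = matFun hP fun x => x⁻¹ :=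
      matFun_conjTranspose hP _
    have h : matFun hP (fun x => x⁻¹) * matFun hP (fun x => x) * matFun hP (fun x => x)
        * matFun hP (fun x => x⁻¹) = matFun hP chif := by
      rw [matFun_mul, matFun_mul, matFun_mul]
      exact matFun_congr hP _ _ (fun x => by by_cases h : x = 0 <;> simp [chif, h])
    rw [matFun_id] at h
    rw [conjTranspose_mul, hih, Matrix.mul_assoc, ← Matrix.mul_assoc Xᴴ X, hXP,
      ← Matrix.mul_assoc, ← Matrix.mul_assoc, h]
  · rw [Matrix.mul_assoc, matFun_mul, matFun_congr hP _ (fun x => x⁻¹) ?_]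
    intro x
    by_cases h : x = 0 <;> simp [chif, h]

/-- `tr √(XXᴴ) = tr √(XᴴX)` -/
lemma trace_sqrt_flip {m : Type*} [Fintype m] [DecidableEq m] (X : Matrix m n ℂ) :
    (posSemidef_self_mul_conjTranspose X).sqrt.trace
      = (posSemidef_conjTranspose_mul_self X).sqrt.trace := by
  set hQ := posSemidef_conjTranspose_mul_self X with hQdef
  set P := hQ.sqrt with hPdef
  have hPs : P.PosSemidef := hQ.posSemidef_sqrt
  have hPh : P.IsHermitian := hPs.1
  have hPP : Xᴴ * X = P * P := hQ.sqrt_mul_self.symm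
  obtain ⟨W, hWP, hWW, hWS⟩ := exists_W hPh X hPP
  have hSP : matFun hPh chif * P = P := mul_chif_left hPh
  set K := W * P * Wᴴ with hKdef
  have hK : K.PosSemidef := hPs.mul_mul_conjTranspose_same W
  have hK2 : K ^ 2 = X * Xᴴ := by
    rw [pow_two]
    have e1 : K * K = W * P * ((Wᴴ * W) * (P * Wᴴ)) := by
      simp only [hKdef, Matrix.mul_assoc]
    rw [e1, hWW, ← Matrix.mul_assoc (matFun hPh chif) P Wᴴ, hSP, ← Matrix.mul_assoc,
      hWP, Matrix.mul_assoc]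
    congr 1
    rw [← hWP, conjTranspose_mul, hPh.eq]
  have hKs : K = (posSemidef_self_mul_conjTranspose X).sqrt :=
    hK.eq_sqrt_of_sq_eq _ hK2
  rw [← hKs, hKdef, Matrix.trace_mul_comm, ← Matrix.mul_assoc, hWW, hSP]

lemma conj_cancel {V A B : Matrix n n ℂ} (hV1 : star V * V = 1)
    (h : V * A * star V = V * B * star V) : A = B := by
  have h2 := congrArg (fun M => star V * M * V) h
  simp only [Matrix.mul_assoc] at h2
  simp only [hV1, Matrix.mul_one] at h2
  simp only [← Matrix.mul_assoc] at h2
  simpa [hV1] using h2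

/-- Polar decomposition with a unitary factor. -/
lemma exists_polar (Z : Matrix n n ℂ) :
    ∃ U : Matrix n n ℂ, U * Uᴴ = 1 ∧ Uᴴ * U = 1 ∧
      Z = U * (posSemidef_conjTranspose_mul_self Z).sqrt := by
  set hQ := posSemidef_conjTranspose_mul_self Z with hQdef
  set P := hQ.sqrt with hPdef
  have hPs : P.PosSemidef := hQ.posSemidef_sqrt
  have hPh : P.IsHermitian := hPs.1
  have hPP : Zᴴ * Z = P * P := hQ.sqrt_mul_self.symm
  obtain ⟨W, hWP, hWW, hWS⟩ := exists_W hPh Z hPP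
  set S := matFun hPh chif with hSdef
  set d := hPh.eigenvalues with hd
  set VP := (hPh.eigenvectorUnitary : Matrix n n ℂ) with hVP
  have hVP1 : star VP * VP = 1 := Unitary.coe_star_mul_self _
  have hVP2 : VP * star VP = 1 := Unitary.coe_mul_star_self _
  set T := W * Wᴴ with hTdef
  have hTps : T.PosSemidef := posSemidef_self_mul_conjTranspose W
  have hTh : T.IsHermitian := hTps.1
  have hTT : T * T = T := by
    have e1 : T * T = W * (Wᴴ * W) * Wᴴ := by simp only [hTdef, Matrix.mul_assoc]
    rw [e1, hWW, hWS]
  set μ := hTh.eigenvalues with hμ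
  set VT := (hTh.eigenvectorUnitary : Matrix n n ℂ) with hVT
  have hVT1 : star VT * VT = 1 := Unitary.coe_star_mul_self _
  have hVT2 : VT * star VT = 1 := Unitary.coe_mul_star_self _
  have hspecT : T = VT * diagonal (RCLike.ofReal ∘ μ) * star VT := hTh.spectral_theorem
  -- eigenvalues of the projection T are 0 or 1
  have hμ01 : ∀ a, μ a = 0 ∨ μ a = 1 := by
    have hDD : (diagonal (RCLike.ofReal ∘ μ) : Matrix n n ℂ) * diagonal (RCLike.ofReal ∘ μ)
        = diagonal (RCLike.ofReal ∘ μ) := by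
      apply conj_cancel hVT1
      have h3 := hTT
      rw [hspecT] at h3
      calc VT * (diagonal (RCLike.ofReal ∘ μ) * diagonal (RCLike.ofReal ∘ μ)) * star VT
          = (VT * diagonal (RCLike.ofReal ∘ μ) * star VT)
            * (VT * diagonal (RCLike.ofReal ∘ μ) * star VT) := by
            simp only [Matrix.mul_assoc]
            rw [← Matrix.mul_assoc (star VT) VT, hVT1, Matrix.one_mul]
        _ = VT * diagonal (RCLike.ofReal ∘ μ) * star VT := h3
    intro a
    rw [diagonal_mul_diagonal] at hDD
    have h5 := congrFun (congrFun hDD a) a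
    simp only [diagonal_apply_eq, Function.comp_apply] at h5
    have h6 : μ a * μ a = μ a := by
      exact_mod_cast h5
    rcases mul_eq_zero.mp (show μ a * (μ a - 1) = 0 by rw [mul_sub, mul_one, h6, sub_self]) with h | h
    · exact Or.inl h
    · exact Or.inr (by linarith [sub_eq_zero.mp h])
  -- trace counting : the two kernels have the same cardinality
  have htrS : S.trace = ∑ b, (chif (d b) : ℂ) := matFun_trace hPh chif
  have htrT : T.trace = ∑ a, ((μ a : ℝ) : ℂ) := by
    rw [hspecT, Matrix.trace_mul_comm, ← Matrix.mul_assoc, hVT1, Matrix.one_mul,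
      trace_diagonal]
    simp
  have htrST : S.trace = T.trace := by
    rw [← hWW, hTdef, Matrix.trace_mul_comm]
  have hsum : ∑ b, chif (d b) = ∑ a, μ a := by
    have := htrST
    rw [htrS, htrT] at this
    exact_mod_cast this
  have hcard : Fintype.card {b // d b = 0} = Fintype.card {a // μ a = 0} := by
    classical
    have h1 : ∑ b, chif (d b) = ((Finset.univ.filter (fun b => ¬ d b = 0)).card : ℝ) := by
      rw [← Finset.sum_boole]
      exact Finset.sum_congr rfl (fun b _ => by by_cases h : d b = 0 <;> simp [chif, h])
    have h2 : ∑ a, μ a = ((Finset.univ.filter (fun a => ¬ μ a = 0)).card : ℝ) := by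
      rw [← Finset.sum_boole]
      refine Finset.sum_congr rfl (fun a _ => ?_)
      rcases hμ01 a with h | h <;> simp [h]
    have h3 : (Finset.univ.filter (fun b => ¬ d b = 0)).card
        = (Finset.univ.filter (fun a => ¬ μ a = 0)).card := by
      have := hsum
      rw [h1, h2] at this
      exact_mod_cast this
    have h4 := Finset.card_filter_add_card_filter_not
      (s := (Finset.univ : Finset n)) (p := fun b => d b = 0)
    have h5 := Finset.card_filter_add_card_filter_not
      (s := (Finset.univ : Finset n)) (p := fun a => μ a = 0)
    rw [Fintype.card_subtype, Fintype.card_subtype]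
    omega
  let e : {b // d b = 0} ≃ {a // μ a = 0} := Fintype.equivOfCardEq hcard
  set Mmid : Matrix n n ℂ := Matrix.of (fun a b =>
    if h : d b = 0 then (if a = (e ⟨b, h⟩ : {a // μ a = 0}).1 then (1:ℂ) else 0) else 0)
    with hMmid
  set C := VT * Mmid * star VP with hC
  set S' := matFun hPh (fun x => if x = 0 then 1 else 0) with hS'
  have hMM : Mmidᴴ * Mmid = diagonal (fun b => if d b = 0 then (1:ℂ) else 0) := by
    ext b b'
    simp only [Matrix.mul_apply, conjTranspose_apply, hMmid, Matrix.of_apply]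
    by_cases hb : d b = 0
    · by_cases hb' : d b' = 0
      · simp only [dif_pos hb, dif_pos hb']
        by_cases hbb : b = b'
        · subst hbb
          simp [diagonal_apply_eq, hb, apply_ite (star : ℂ → ℂ), ite_mul, mul_ite,
            Finset.sum_ite_eq']
        · have hne : ((e ⟨b, hb⟩ : {a // μ a = 0}) : n) ≠ (e ⟨b', hb'⟩ : {a // μ a = 0}) := by
            intro hcontra
            exact hbb (Subtype.ext_iff.mp (e.injective (Subtype.ext hcontra)))
          rw [diagonal_apply_ne _ hbb]
          rw [Finset.sum_eq_zero]
          intro a _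
          by_cases ha : a = (e ⟨b, hb⟩ : {a // μ a = 0}).1
          · subst ha
            simp [hne]
          · simp [ha]
      · simp only [dif_neg hb']
        rw [diagonal_apply_ne _ (fun hcontra => hb' (by rw [← hcontra]; exact hb))]
        simp
    · simp only [dif_neg hb]
      simp only [star_zero, zero_mul, Finset.sum_const_zero]
      by_cases hbb : b = b'
      · subst hbb; simp [hb]
      · rw [diagonal_apply_ne _ hbb]
  have hVP1' : VPᴴ * VP = 1 := by rw [← Matrix.star_eq_conjTranspose]; exact hVP1
  have hVP2' : VP * VPᴴ = 1 := by rw [← Matrix.star_eq_conjTranspose]; exact hVP2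
  have hVT1' : VTᴴ * VT = 1 := by rw [← Matrix.star_eq_conjTranspose]; exact hVT1
  have hVT2' : VT * VTᴴ = 1 := by rw [← Matrix.star_eq_conjTranspose]; exact hVT2
  have hspecT' : T = VT * diagonal (RCLike.ofReal ∘ μ) * VTᴴ := by
    rw [← Matrix.star_eq_conjTranspose]; exact hspecT
  have hspecP' : P = VP * diagonal (RCLike.ofReal ∘ d) * VPᴴ := by
    rw [← Matrix.star_eq_conjTranspose]; exact hPh.spectral_theorem
  have hCdef : C = VT * Mmid * VPᴴ := by
    rw [hC, Matrix.star_eq_conjTranspose]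
  -- CᴴC = S'
  have hCC : Cᴴ * C = S' := by
    have e1 : Cᴴ * C = VP * (Mmidᴴ * ((VTᴴ * VT) * (Mmid * VPᴴ))) := by
      rw [hCdef]
      simp only [conjTranspose_mul, conjTranspose_conjTranspose, Matrix.mul_assoc]
    rw [e1, hVT1', Matrix.one_mul, ← Matrix.mul_assoc Mmidᴴ Mmid VPᴴ, hMM]
    rw [hS', matFun, ← hVP, ← hd, Matrix.star_eq_conjTranspose, Matrix.mul_assoc]
    have hJ : (fun b => if d b = 0 then (1:ℂ) else 0)
        = (RCLike.ofReal ∘ (fun x : ℝ => if x = 0 then 1 else 0) ∘ d) := by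
      funext b
      by_cases h : d b = 0 <;> simp [h]
    rw [hJ]
  -- T * C = 0
  have hTC : T * C = 0 := by
    have e1 : T * C = VT * (diagonal (RCLike.ofReal ∘ μ) * ((VTᴴ * VT) * (Mmid * VPᴴ))) := by
      rw [hspecT', hCdef]
      simp only [Matrix.mul_assoc]
    rw [e1, hVT1', Matrix.one_mul, ← Matrix.mul_assoc (diagonal _) Mmid VPᴴ]
    have hDM : diagonal (RCLike.ofReal ∘ μ) * Mmid = 0 := by
      ext a b
      rw [diagonal_mul]
      simp only [hMmid, Matrix.of_apply, Function.comp_apply]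
      by_cases h : d b = 0
      · rw [dif_pos h]
        by_cases ha : a = (e ⟨b, h⟩ : {a // μ a = 0}).1
        · have : μ a = 0 := ha ▸ (e ⟨b, h⟩).2
          simp [this]
        · simp [ha]
      · simp [dif_neg h]
    rw [hDM, Matrix.zero_mul, Matrix.mul_zero]
  -- C * P = 0
  have hCP : C * P = 0 := by
    have e1 : C * P = VT * (Mmid * ((VPᴴ * VP) * (diagonal (RCLike.ofReal ∘ d) * VPᴴ))) := by
      rw [hCdef]
      conv_lhs => rw [hspecP']
      simp only [Matrix.mul_assoc]
    rw [e1, hVP1', Matrix.one_mul, ← Matrix.mul_assoc Mmid (diagonal _) VPᴴ]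
    have hMD : Mmid * diagonal (RCLike.ofReal ∘ d) = 0 := by
      ext a b
      rw [mul_diagonal]
      simp only [hMmid, Matrix.of_apply, Function.comp_apply]
      by_cases h : d b = 0
      · simp [h]
      · simp [dif_neg h]
    rw [hMD, Matrix.zero_mul, Matrix.mul_zero]
  -- W-side orthogonality
  have hTW : T * W = W := by
    have e1 : T * W = W * (Wᴴ * W) := by simp only [hTdef, Matrix.mul_assoc]
    rw [e1, hWW, hWS]
  have hWhT : Wᴴ * T = Wᴴ := by
    have := congrArg conjTranspose hTW
    rwa [conjTranspose_mul, hTh.eq] at this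
  have hWC : Wᴴ * C = 0 := by
    rw [← hWhT, Matrix.mul_assoc, hTC, Matrix.mul_zero]
  -- the unitary
  have hSS' : S + S' = 1 := by
    rw [hSdef, hS', matFun_add]
    rw [matFun_congr hPh _ (fun _ => 1) ?_]
    · exact matFun_one hPh
    intro x
    by_cases h : x = 0 <;> simp [chif, h]
  have hUU : (W + C)ᴴ * (W + C) = 1 := by
    rw [conjTranspose_add, Matrix.add_mul, Matrix.mul_add, Matrix.mul_add]
    rw [hWW, hWC, hCC]
    have hCW : Cᴴ * W = 0 := by
      have := congrArg conjTranspose hWC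
      rwa [conjTranspose_mul, conjTranspose_conjTranspose, conjTranspose_zero] at this
    rw [hCW]
    simpa using hSS'
  refine ⟨W + C, mul_eq_one_comm.mp hUU, hUU, ?_⟩
  rw [Matrix.add_mul, hCP, add_zero, hWP]

end UhlmannAux

namespace UhlmannAux

lemma sqrt_congr {n : Type*} [Fintype n] [DecidableEq n] {A B : Matrix n n ℂ} (h : A = B)
    (hA : A.PosSemidef) (hB : B.PosSemidef) : hA.sqrt = hB.sqrt := by
  subst h; rfl

variable {A B : Type*} [Fintype A] [Fintype B] [DecidableEq A] [DecidableEq B]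

/-- The matrix of a bipartite vector. -/
def matOf (ψ : A × B → ℂ) : Matrix B A ℂ := Matrix.of fun j i => ψ (i, j)

lemma ptrA_eq_mul (ψ : A × B → ℂ) : ptrA ψ = matOf ψ * (matOf ψ)ᴴ := by
  ext j q
  simp [ptrA, matOf, Matrix.mul_apply, Matrix.conjTranspose_apply, RCLike.star_def]

lemma sum_eq_trace (ψ ψ' : A × B → ℂ) :
    ∑ k : A × B, (starRingEnd ℂ) (ψ k) * ψ' k = ((matOf ψ)ᴴ * matOf ψ').trace := by
  rw [Matrix.trace, Fintype.sum_prod_type]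
  simp [Matrix.mul_apply, Matrix.diag, Matrix.conjTranspose_apply, matOf, RCLike.star_def]

end UhlmannAux

/-- **Uhlmann's theorem (purification form).** The fidelity of the two reduced states
is attained as the overlap of `φ₁` with some purification `φ` of `ρ₀ = ptrA φ₀`. -/
theorem uhlmann_exists_purification
    {A B : Type*} [Fintype A] [Fintype B] [DecidableEq A] [DecidableEq B]
    (φ₀ φ₁ : A × B → ℂ)
    (h₀ : ∑ k : A × B, (starRingEnd ℂ) (φ₀ k) * φ₀ k = 1)
    (h₁ : ∑ k : A × B, (starRingEnd ℂ) (φ₁ k) * φ₁ k = 1) :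
    ∃ φ : A × B → ℂ,
      (∑ k : A × B, (starRingEnd ℂ) (φ k) * φ k = 1) ∧
      ptrA φ = ptrA φ₀ ∧
      ‖∑ k : A × B, (starRingEnd ℂ) (φ k) * φ₁ k‖ =
        fidelity (ptrA_posSemidef φ₀) (ptrA_posSemidef φ₁) := by
  classical
  set M₀ := UhlmannAux.matOf φ₀ with hM₀
  set M₁ := UhlmannAux.matOf φ₁ with hM₁
  set R := (ptrA_posSemidef φ₀).sqrt with hR
  have hRh : Rᴴ = R := (ptrA_posSemidef φ₀).posSemidef_sqrt.isHermitian.eq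
  set Z := M₀ᴴ * M₁ with hZ
  obtain ⟨U, hU1, hU2, hZP⟩ := UhlmannAux.exists_polar Z
  set P := (posSemidef_conjTranspose_mul_self Z).sqrt with hP
  have hmat : UhlmannAux.matOf (fun k : A × B => (M₀ * U) k.2 k.1) = M₀ * U := rfl
  refine ⟨fun k => (M₀ * U) k.2 k.1, ?_, ?_, ?_⟩
  · rw [UhlmannAux.sum_eq_trace, hmat]
    have h : (M₀ * U)ᴴ * (M₀ * U) = Uᴴ * (M₀ᴴ * M₀) * U := by
      rw [conjTranspose_mul]
      simp only [Matrix.mul_assoc]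
    rw [h, Matrix.trace_mul_cycle, hU1, Matrix.one_mul, ← UhlmannAux.sum_eq_trace]
    exact h₀
  · rw [UhlmannAux.ptrA_eq_mul, hmat, UhlmannAux.ptrA_eq_mul φ₀]
    rw [conjTranspose_mul, Matrix.mul_assoc, ← Matrix.mul_assoc U Uᴴ M₀ᴴ, hU1,
      Matrix.one_mul]
  · rw [UhlmannAux.sum_eq_trace, hmat]
    have hover : ((M₀ * U)ᴴ * M₁).trace = P.trace := by
      rw [conjTranspose_mul, Matrix.mul_assoc, ← hZ, hZP, ← Matrix.mul_assoc, hU2,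
        Matrix.one_mul]
    rw [hover]
    have hPpsd : P.PosSemidef := (posSemidef_conjTranspose_mul_self Z).posSemidef_sqrt
    have htr : 0 ≤ P.trace := by
      have hdiag : ∀ i, 0 ≤ P i i := by
        intro i
        exact hPpsd.diag_nonneg
      rw [Matrix.trace]
      exact Finset.sum_nonneg fun i _ => hdiag i
    obtain ⟨hre, him⟩ := Complex.nonneg_iff.mp htr
    have habs : ‖P.trace‖ = P.trace.re := by
      have hPt : P.trace = ((P.trace.re : ℝ) : ℂ) := by
        apply Complex.ext <;> simp [← him]
      rw [hPt, Complex.norm_real, Real.norm_eq_abs, abs_of_nonneg hre]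
      simp
    rw [habs]
    have key : (sqrt_mul_mul_sqrt_posSemidef (ptrA_posSemidef φ₀) (ptrA_posSemidef φ₁)).sqrt.trace
        = P.trace := by
      set X := R * M₁ with hX
      have h1 : R * ptrA φ₁ * R = X * Xᴴ := by
        rw [UhlmannAux.ptrA_eq_mul φ₁, hX, conjTranspose_mul, hRh]
        simp only [Matrix.mul_assoc, ← hM₁]
      have h2 : Xᴴ * X = Zᴴ * Z := by
        rw [hX, conjTranspose_mul, hRh, Matrix.mul_assoc, ← Matrix.mul_assoc R R M₁,
          (ptrA_posSemidef φ₀).sqrt_mul_self, UhlmannAux.ptrA_eq_mul φ₀, hZ,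
          conjTranspose_mul, conjTranspose_conjTranspose]
        simp only [Matrix.mul_assoc, ← hM₀]
      have e1 : (sqrt_mul_mul_sqrt_posSemidef (ptrA_posSemidef φ₀) (ptrA_posSemidef φ₁)).sqrt
          = (posSemidef_self_mul_conjTranspose X).sqrt := UhlmannAux.sqrt_congr h1 _ _
      have e2 : (posSemidef_conjTranspose_mul_self X).sqrt = P :=
        UhlmannAux.sqrt_congr h2 _ _
      rw [e1, UhlmannAux.trace_sqrt_flip, e2]
    rw [fidelity, key]
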